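/- Let D ⊆ ℂ² be open, F(z₁,z₂) = (c z₁ z₂^{d}, z₂) with c ∈ ℂ*, d ∈ ℤ, defined on points with z₂ ≠ 0, and suppose F maps D ∩ (ℂ × ℂ*) bijectively onto itself. If for some w ∈ ℂ* with |c|·|w|^{d} > 1 the disc {(z₁, w) : |z₁| < ε} is contained in D, then the whole line {(z₁, w) : z₁ ∈ ℂ} is contained in D. -/

import Mathlib

open Complex

theorem stmt_8 (D : Set (ℂ × ℂ)) (hD : IsOpen D) (c : ℂ) (hc : c ≠ 0) (d : ℤ)
    (F : ℂ × ℂ → ℂ × ℂ) (hF : F = fun z => (c * z.1 * z.2 ^ d, z.2))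
    (hbij : Set.BijOn F (D ∩ {p : ℂ × ℂ | p.2 ≠ 0}) (D ∩ {p : ℂ × ℂ | p.2 ≠ 0}))
    (w : ℂ) (hw : w ≠ 0) (hgt : 1 < ‖c‖ * ‖w‖ ^ d)
    (ε : ℝ) (hε : 0 < ε)
    (hdisc : {p : ℂ × ℂ | ‖p.1‖ < ε ∧ p.2 = w} ⊆ D) :
    {p : ℂ × ℂ | p.2 = w} ⊆ D := by
  intro p hp
  obtain ⟨z₁, hpz⟩ : ∃ z₁, p = (z₁, w) := ⟨p.1, by ext <;> simp [hp]; exact hp⟩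
  subst hpz
  set u : ℂ := c * w ^ d with hu
  have hu0 : u ≠ 0 := mul_ne_zero hc (zpow_ne_zero _ hw)
  have habs : ‖u‖ = ‖c‖ * ‖w‖ ^ d := by
    simp [hu, map_mul, map_zpow₀]
  -- iterate formula
  have hFz : ∀ z : ℂ, F (z, w) = (u * z, w) := by
    intro z; rw [hF]; simp only [hu]; congr 1; ring
  have hiter : ∀ (k : ℕ) (z : ℂ), F^[k] (z, w) = (u ^ k * z, w) := by
    intro k
    induction k with
    | zero => intro z; simp
    | succ n ih =>
      intro z
      rw [Function.iterate_succ_apply, hFz, ih]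
      congr 1; ring
  -- choose k
  obtain ⟨k, hk⟩ := pow_unbounded_of_one_lt (‖z₁‖ / ε) (by rw [← habs] at hgt; exact hgt)
  have hak : ‖z₁‖ / ‖u‖ ^ k < ε := by
    have h0 : 0 < ‖u‖ := by rw [habs]; linarith
    rw [div_lt_iff₀ (by positivity)]
    have h1 : ‖z₁‖ / ε < ‖u‖ ^ k := hk
    calc ‖z₁‖ = (‖z₁‖ / ε) * ε := by field_simp
    _ < ‖u‖ ^ k * ε := by
        apply mul_lt_mul_of_pos_right h1 hε
    _ = ε * ‖u‖ ^ k := by ring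
  set q : ℂ × ℂ := (z₁ / u ^ k, w) with hq
  have hqD : q ∈ D ∩ {p : ℂ × ℂ | p.2 ≠ 0} := by
    constructor
    · apply hdisc
      refine ⟨?_, rfl⟩
      simpa [hq, map_div₀, map_pow] using hak
    · exact hw
  have hmaps : Set.MapsTo (F^[k]) (D ∩ {p : ℂ × ℂ | p.2 ≠ 0}) (D ∩ {p : ℂ × ℂ | p.2 ≠ 0}) :=
    hbij.mapsTo.iterate k
  have := hmaps hqD
  rw [hq, hiter k (z₁ / u ^ k)] at this
  have hval : u ^ k * (z₁ / u ^ k) = z₁ := by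
    field_simp
  rw [hval] at this
  exact this.1
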